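/- The map g : Z_{2m-1} → Z_{2m-1} defined by g(a) = a-1 if a > 0, g(a) = a+1 if a < 0, and g(0) = 0 is an endomorphism of the Sugihara algebra Z_{2m-1} (preserving min, max, negation, and implication), for m ≥ 2. -/
import Mathlib


/-- Sugihara implication on the chain of integers. -/
def sImp (a b : ℤ) : ℤ := if a ≤ b then max (-a) b else min (-a) b

/-- Derived fusion operation. -/
def sFus (a b : ℤ) : ℤ := -(sImp a (-b))

/-- Universe of the Sugihara algebra Z_{2m-1}. -/
def Zodd (m : ℤ) : Set ℤ := {a | -(m-1) ≤ a ∧ a ≤ m-1}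

/-- Universe of the Sugihara algebra Z_{2m}. -/
def Zeven (m : ℤ) : Set ℤ := {a | -m ≤ a ∧ a ≤ m ∧ a ≠ 0}

/-- The endomorphism g of Z_{2m-1}. -/
def gMap (a : ℤ) : ℤ := if 0 < a then a - 1 else if a < 0 then a + 1 else 0

set_option maxHeartbeats 2000000 in
/-- For m ≥ 2, g is an endomorphism of the Sugihara algebra Z_{2m-1}. -/
theorem gMap_endomorphism (m : ℤ) (hm : 2 ≤ m) :
    (∀ a ∈ Zodd m, gMap a ∈ Zodd m) ∧
    (∀ a ∈ Zodd m, ∀ b ∈ Zodd m,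
      gMap (min a b) = min (gMap a) (gMap b) ∧
      gMap (max a b) = max (gMap a) (gMap b) ∧
      gMap (-a) = -(gMap a) ∧
      gMap (sImp a b) = sImp (gMap a) (gMap b)) := by
  constructor
  · intro a ha
    simp only [Zodd, Set.mem_setOf_eq, gMap] at *
    split_ifs <;> omega
  · intro a _ b _
    refine ⟨?_, ?_, ?_, ?_⟩ <;>
      simp only [gMap, sImp, min_def, max_def] <;> split_ifs <;> omega
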